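/- Let H and K be monoids, and let f be a monoid isomorphism from the reduced finitary power monoid P_fin,1(H) to P_fin,1(K). Then for every two-element set X in P_fin,1(H), the image f(X) is a two-element set. -/

import Mathlib

open scoped Pointwise

/-- The reduced finitary power monoid of `M`: finite subsets of `M` containing `1`,
under setwise multiplication, realized as a submonoid of `Finset M`. -/
def redPow (M : Type*) [Monoid M] [DecidableEq M] : Submonoid (Finset M) where
  carrier := {X | (1 : M) ∈ X}
  one_mem' := by simp
  mul_mem' := by
    intro X Y hX hY
    simpa using Finset.mul_mem_mul hX hY

namespace RedPowProof

open Finset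

variable {M : Type*} [Monoid M] [DecidableEq M]

theorem one_mem_val (Z : redPow M) : (1 : M) ∈ (Z : Finset M) := Z.2

theorem val_mul (Z W : redPow M) :
    ((Z * W : redPow M) : Finset M) = (Z : Finset M) * (W : Finset M) := rfl

theorem val_pow (Z : redPow M) (k : ℕ) :
    ((Z ^ k : redPow M) : Finset M) = (Z : Finset M) ^ k := SubmonoidClass.coe_pow Z k

theorem val_one : ((1 : redPow M) : Finset M) = ({1} : Finset M) :=
  (Finset.singleton_one).symm

theorem mem_val_mul {Z W : redPow M} {w : M} :
    w ∈ ((Z * W : redPow M) : Finset M) ↔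
      ∃ u ∈ (Z : Finset M), ∃ v ∈ (W : Finset M), u * v = w := by
  rw [val_mul, Finset.mem_mul]

/-- two-sided divisibility -/
def Dvd2 (U V : redPow M) : Prop := ∃ A B : redPow M, A * U * B = V

theorem Dvd2.val_subset {U V : redPow M} (h : Dvd2 U V) :
    (U : Finset M) ⊆ (V : Finset M) := by
  obtain ⟨A, B, h⟩ := h
  rw [← h, val_mul, val_mul]
  exact (subset_mul_right _ (one_mem_val A)).trans
    (subset_mul_left _ (one_mem_val B))

/-- powers of `{1, a}` -/
theorem pow_val {X : redPow M} {a : M} (hX : (X : Finset M) = {1, a}) (k : ℕ) :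
    ((X ^ k : redPow M) : Finset M) = (Finset.range (k + 1)).image (a ^ ·) := by
  induction k with
  | zero =>
    rw [pow_zero, val_one]
    ext w
    simp
  | succ k ih =>
    rw [pow_succ]
    ext w
    rw [mem_val_mul, ih, hX]
    simp only [mem_image, mem_range, mem_insert, mem_singleton]
    constructor
    · rintro ⟨u, ⟨j, hj, rfl⟩, v, hv, rfl⟩
      rcases hv with rfl | rfl
      · exact ⟨j, by omega, (mul_one _).symm⟩
      · exact ⟨j + 1, by omega, pow_succ _ j⟩
    · rintro ⟨j, hj, rfl⟩
      rcases Nat.lt_or_ge j (k + 1) with h | h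
      · exact ⟨a ^ j, ⟨j, h, rfl⟩, 1, Or.inl rfl, mul_one _⟩
      · have hj' : j = k + 1 := by omega
        subst hj'
        exact ⟨a ^ k, ⟨k, by omega, rfl⟩, a, Or.inr rfl, (pow_succ a k).symm⟩

theorem pow_sub_val {Z : redPow M} {m n : ℕ} (h : m ≤ n) :
    ((Z ^ m : redPow M) : Finset M) ⊆ ((Z ^ n : redPow M) : Finset M) := by
  obtain ⟨d, rfl⟩ := Nat.exists_eq_add_of_le h
  rw [pow_add, val_mul]
  exact subset_mul_left _ (one_mem_val _)

/-- strict growth of powers before stabilization -/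
theorem growth (Z : redPow M) (m : ℕ) : ∀ n, m ≤ n →
    (∀ k, m ≤ k → k < n → Z ^ k ≠ Z ^ (k + 1)) →
    ((Z ^ m : redPow M) : Finset M).card + (n - m) ≤ ((Z ^ n : redPow M) : Finset M).card := by
  intro n
  induction n with
  | zero =>
    intro h _
    interval_cases m
    simp
  | succ n ih =>
    intro hmn hne
    rcases Nat.lt_or_ge m (n + 1) with hm | hm
    · have hmn' : m ≤ n := by omega
      have h1 := ih hmn' (fun k hk hk' => hne k hk (by omega))
      have hsub : ((Z ^ n : redPow M) : Finset M) ⊆ ((Z ^ (n+1) : redPow M) : Finset M) :=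
        pow_sub_val (by omega)
      have hne' : ((Z ^ n : redPow M) : Finset M) ≠ ((Z ^ (n+1) : redPow M) : Finset M) :=
        fun h => hne n hmn' (by omega) (Subtype.ext h)
      have hlt : ((Z ^ n : redPow M) : Finset M).card < ((Z ^ (n+1) : redPow M) : Finset M).card :=
        card_lt_card (Finset.ssubset_iff_subset_ne.mpr ⟨hsub, hne'⟩)
      omega
    · have : m = n + 1 := by omega
      subst this
      simp


theorem mem_redPow {V : Finset M} : V ∈ redPow M ↔ (1 : M) ∈ V := Iff.rfl

theorem erase_mul_pow {Y : redPow M} {b : M} (hb : b ∈ (Y : Finset M)) (hb1 : b ≠ 1) :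
    (((Y ^ 2 : redPow M) : Finset M).erase b) * (Y : Finset M)
      = ((Y ^ 3 : redPow M) : Finset M) := by
  have h32 : ((Y ^ 3 : redPow M) : Finset M)
      = ((Y ^ 2 : redPow M) : Finset M) * (Y : Finset M) := by
    rw [← val_mul, ← pow_succ]
  have hsq : ((Y ^ 2 : redPow M) : Finset M) = (Y : Finset M) * (Y : Finset M) := by
    rw [← val_mul, ← pow_two]
  apply Finset.Subset.antisymm
  · rw [h32]
    exact mul_subset_mul_right (erase_subset _ _)
  · intro w hw
    rw [h32, Finset.mem_mul] at hw
    obtain ⟨u, hu, v, hv, rfl⟩ := hw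
    by_cases hub : u = b
    · have ht : b * v ∈ ((Y ^ 2 : redPow M) : Finset M) := by
        rw [hsq]; exact mul_mem_mul hb hv
      rw [hub]
      by_cases htb : b * v = b
      · rw [htb]
        exact mem_mul.mpr ⟨1, mem_erase.mpr ⟨Ne.symm hb1, one_mem_val (Y ^ 2)⟩, b, hb, one_mul b⟩
      · exact mem_mul.mpr ⟨b * v, mem_erase.mpr ⟨htb, ht⟩, 1, one_mem_val Y, mul_one _⟩
    · exact mem_mul.mpr ⟨u, mem_erase.mpr ⟨hub, hu⟩, v, hv, rfl⟩

theorem card_pw1 (S : Finset M) (hS : (1 : M) ∈ S) :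
    (((S.erase 1).powerset).image (insert (1 : M))).card = 2 ^ (S.card - 1) := by
  rw [Finset.card_image_of_injOn, card_powerset, card_erase_of_mem hS]
  intro u hu v hv h
  rw [Finset.mem_coe, mem_powerset] at hu hv
  have h1u : (1 : M) ∉ u := fun hh => (mem_erase.mp (hu hh)).1 rfl
  have h1v : (1 : M) ∉ v := fun hh => (mem_erase.mp (hv hh)).1 rfl
  rw [← erase_insert h1u, ← erase_insert h1v, h]

end RedPowProof

open RedPowProof Finset

/-- If `f : P_fin,1(H) → P_fin,1(K)` is a monoid isomorphism, then `f` maps every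
two-element set to a two-element set. -/
theorem stmt0 {H K : Type*} [Monoid H] [Monoid K] [DecidableEq H] [DecidableEq K]
    (f : redPow H ≃* redPow K) (X : redPow H) (hX : (X : Finset H).card = 2) :
    ((f X : redPow K) : Finset K).card = 2 := by
  classical
  have h1X : (1 : H) ∈ (X : Finset H) := X.2
  obtain ⟨x, y, hxy, hXv⟩ := Finset.card_eq_two.mp hX
  have hXa : ∃ a : H, a ≠ 1 ∧ (X : Finset H) = {1, a} := by
    rw [hXv] at h1X
    rcases Finset.mem_insert.mp h1X with hh | hh
    · exact ⟨y, fun h => hxy (by rw [← hh, h]), by rw [hXv, ← hh]⟩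
    · rw [Finset.mem_singleton] at hh
      exact ⟨x, fun h => hxy (by rw [h, hh]), by rw [hXv, ← hh, Finset.pair_comm]⟩
  obtain ⟨a, ha1, hXa⟩ := hXa
  by_contra hcard
  set Y : redPow K := f X with hYdef
  have h1Y : (1 : K) ∈ (Y : Finset K) := Y.2
  have hYne1 : Y ≠ 1 := by
    intro h
    have hX1 : X = 1 := by
      have := congrArg f.symm h
      rw [hYdef, MulEquiv.symm_apply_apply, map_one] at this
      exact this
    rw [hX1, val_one] at hX
    simp at hX
  have hY3 : 3 ≤ (Y : Finset K).card := by
    have hne0 : (Y : Finset K).card ≠ 0 := Finset.card_ne_zero_of_mem h1Y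
    have hne1 : (Y : Finset K).card ≠ 1 := by
      intro h
      obtain ⟨w, hw⟩ := Finset.card_eq_one.mp h
      apply hYne1
      apply Subtype.ext
      rw [val_one, hw]
      have := h1Y
      rw [hw, Finset.mem_singleton] at this
      rw [← this]
    omega
  have h2card : 1 < ((Y : Finset K).erase 1).card := by
    rw [card_erase_of_mem h1Y]; omega
  obtain ⟨b, hbmem, c, hcmem, hbc⟩ := Finset.one_lt_card.mp h2card
  obtain ⟨hb1, hbY⟩ := mem_erase.mp hbmem
  obtain ⟨hc1, hcY⟩ := mem_erase.mp hcmem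
  by_cases htor : ∃ i j : ℕ, i < j ∧ a ^ i = a ^ j
  · -- torsion case
    obtain ⟨i, j, hij, hpow⟩ := htor
    have hstab0 : X ^ j = X ^ (j + 1) := by
      apply Subtype.ext
      rw [pow_val hXa, pow_val hXa]
      apply Finset.Subset.antisymm
      · exact image_subset_image (range_subset_range.mpr (by omega))
      · intro w hw
        obtain ⟨m, hm, rfl⟩ := mem_image.mp hw
        rw [mem_range] at hm
        rcases Nat.lt_or_ge m (j + 1) with h | h
        · exact mem_image.mpr ⟨m, mem_range.mpr h, rfl⟩
        · have hmeq : m = j + 1 := by omega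
          subst hmeq
          have heq : a ^ (j + 1) = a ^ (i + 1) := by
            rw [pow_succ, pow_succ, ← hpow]
          rw [heq]
          exact mem_image.mpr ⟨i + 1, mem_range.mpr (by omega), rfl⟩
    have hex : ∃ k, X ^ k = X ^ (k + 1) := ⟨j, hstab0⟩
    set τ := Nat.find hex with hτdef
    have hτ : X ^ τ = X ^ (τ + 1) := Nat.find_spec hex
    have hτmin : ∀ k, k < τ → X ^ k ≠ X ^ (k + 1) := fun k hk => Nat.find_min hex hk
    have hτpos : 1 ≤ τ := by
      by_contra hτ0
      have hτ0' : τ = 0 := by omega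
      rw [hτ0'] at hτ
      have h1 : ((X ^ 0 : redPow H) : Finset H) = ((X ^ 1 : redPow H) : Finset H) :=
        congrArg Subtype.val hτ
      rw [pow_zero, pow_one, val_one] at h1
      rw [← h1] at hX
      simp at hX
    have hstab : ∀ k, τ ≤ k → X ^ k = X ^ τ := by
      intro k hk
      induction k with
      | zero =>
        have : τ = 0 := by omega
        rw [this]
      | succ k ih =>
        rcases Nat.lt_or_ge k τ with h | h
        · have : τ = k + 1 := by omega
          rw [this]
        · have hk' := ih h
          rw [pow_succ, hk', ← pow_succ, ← hτ]
    have hE2 : X ^ τ * X ^ τ = X ^ τ := by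
      rw [← pow_add]
      exact hstab (τ + τ) (by omega)
    have hEcard_le : ((X ^ τ : redPow H) : Finset H).card ≤ τ + 1 := by
      rw [pow_val hXa]
      exact card_image_le.trans (by rw [card_range])
    have hEcard_ge : τ + 1 ≤ ((X ^ τ : redPow H) : Finset H).card := by
      have hg := growth X 0 τ (by omega) (fun k _ hk => hτmin k hk)
      rw [pow_zero, val_one, card_singleton] at hg
      omega
    have hYτne : ∀ k, 1 ≤ k → k < τ → Y ^ k ≠ Y ^ (k + 1) := by
      intro k _ hk h
      apply hτmin k hk
      have := congrArg f.symm h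
      rw [hYdef, ← map_pow, ← map_pow, MulEquiv.symm_apply_apply, MulEquiv.symm_apply_apply]
        at this
      exact this
    have hF_ge : τ + 2 ≤ ((Y ^ τ : redPow K) : Finset K).card := by
      have hg := growth Y 1 τ hτpos hYτne
      rw [pow_one] at hg
      omega
    have hF2 : Y ^ τ * Y ^ τ = Y ^ τ := by
      rw [hYdef, ← map_pow, ← map_mul, hE2]
    have hsymmF : f.symm (Y ^ τ) = X ^ τ := by
      rw [hYdef, ← map_pow, MulEquiv.symm_apply_apply]
    have hFmul : ((Y ^ τ : redPow K) : Finset K) * ((Y ^ τ : redPow K) : Finset K)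
        = ((Y ^ τ : redPow K) : Finset K) := by
      rw [← val_mul, hF2]
    -- injection of powersets
    have hmain :
        ((((Y ^ τ : redPow K) : Finset K).erase 1).powerset.image (insert (1 : K))).card ≤
        ((((X ^ τ : redPow H) : Finset H).erase 1).powerset.image (insert (1 : H))).card := by
      apply Finset.card_le_card_of_injOn
        (fun V => if h : (1 : K) ∈ V then ((f.symm ⟨V, mem_redPow.mpr h⟩ : redPow H) : Finset H)
          else ∅)
      · intro V hV
        obtain ⟨u, hu, rfl⟩ := mem_image.mp hV
        rw [mem_powerset] at hu
        have h1V : (1 : K) ∈ insert (1 : K) u := mem_insert_self _ _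
        simp only [Finset.mem_coe]
        rw [dif_pos h1V]
        have hVF : insert (1 : K) u ⊆ ((Y ^ τ : redPow K) : Finset K) :=
          insert_subset (one_mem_val _) (hu.trans (erase_subset _ _))
        have hdiv : (⟨insert (1 : K) u, mem_redPow.mpr h1V⟩ : redPow K) * Y ^ τ = Y ^ τ := by
          apply Subtype.ext
          rw [val_mul]
          apply Finset.Subset.antisymm
          · exact (mul_subset_mul_right hVF).trans (le_of_eq hFmul)
          · exact subset_mul_right _ h1V
        have hdiv' : f.symm ⟨insert (1 : K) u, mem_redPow.mpr h1V⟩ * X ^ τ = X ^ τ := by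
          have := congrArg f.symm hdiv
          rw [map_mul, hsymmF] at this
          exact this
        have hsub : ((f.symm ⟨insert (1 : K) u, mem_redPow.mpr h1V⟩ : redPow H) : Finset H)
            ⊆ ((X ^ τ : redPow H) : Finset H) := by
          have h' : ((f.symm ⟨insert (1 : K) u, mem_redPow.mpr h1V⟩ : redPow H) : Finset H) *
              ((X ^ τ : redPow H) : Finset H) = ((X ^ τ : redPow H) : Finset H) := by
            rw [← val_mul, hdiv']
          calc ((f.symm ⟨insert (1 : K) u, mem_redPow.mpr h1V⟩ : redPow H) : Finset H)
              ⊆ _ * ((X ^ τ : redPow H) : Finset H) := subset_mul_left _ (one_mem_val _)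
            _ = _ := h'
        apply mem_image.mpr
        exact ⟨_, mem_powerset.mpr (erase_subset_erase _ hsub), insert_erase (one_mem_val _)⟩
      · intro V hV V' hV' h
        have h1V : (1 : K) ∈ V := by
          rw [Finset.mem_coe] at hV
          obtain ⟨u, _, rfl⟩ := mem_image.mp hV
          exact mem_insert_self _ _
        have h1V' : (1 : K) ∈ V' := by
          rw [Finset.mem_coe] at hV'
          obtain ⟨u, _, rfl⟩ := mem_image.mp hV'
          exact mem_insert_self _ _
        simp only at h
        rw [dif_pos h1V, dif_pos h1V'] at h
        have := f.symm.injective (Subtype.ext h)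
        exact congrArg Subtype.val this
    rw [card_pw1 _ (one_mem_val _), card_pw1 _ (one_mem_val _)] at hmain
    have hexp : ((Y ^ τ : redPow K) : Finset K).card - 1 ≤
        ((X ^ τ : redPow H) : Finset H).card - 1 :=
      (Nat.pow_le_pow_iff_right (by omega)).mp hmain
    omega
  · -- infinite order case
    have inj : ∀ m n : ℕ, a ^ m = a ^ n → m = n := by
      intro m n h
      by_contra hmn
      rcases Nat.lt_or_ge m n with hlt | hge
      · exact htor ⟨m, n, hlt, h⟩
      · exact htor ⟨n, m, by omega, h.symm⟩
    have him : ((X ^ 3 : redPow H) : Finset H) = (Finset.range 4).image (a ^ ·) :=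
      pow_val hXa 3
    -- the divisor bound on the H side
    have hbound : ∀ U : redPow H, Dvd2 U (X ^ 3) → (U : Finset H) ∈
        insert ((X ^ 3 : redPow H) : Finset H)
          ((({a, a ^ 2} : Finset H).powerset).image (insert (1 : H))) := by
      intro U hU
      have hUX : (U : Finset H) ⊆ ((X ^ 3 : redPow H) : Finset H) := hU.val_subset
      obtain ⟨A, B, hAB⟩ := hU
      have hv : (A : Finset H) * (U : Finset H) * (B : Finset H)
          = ((X ^ 3 : redPow H) : Finset H) := by
        rw [← val_mul, ← val_mul, hAB]
      have hAX : (A : Finset H) ⊆ ((X ^ 3 : redPow H) : Finset H) := by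
        rw [← hv]
        exact (subset_mul_left _ (one_mem_val U)).trans (subset_mul_left _ (one_mem_val B))
      have hBX : (B : Finset H) ⊆ ((X ^ 3 : redPow H) : Finset H) := by
        rw [← hv]
        exact subset_mul_right _ (mem_mul.mpr ⟨1, one_mem_val A, 1, one_mem_val U, one_mul 1⟩)
      by_cases h3 : a ^ 3 ∈ (U : Finset H)
      · have key : ∀ m : ℕ, 0 < m → m ≤ 2 → a ^ m ∈ (U : Finset H) := by
          intro m hm0 hm2
          by_contra hmU
          have hmem : a ^ m ∈ (A : Finset H) * (U : Finset H) * (B : Finset H) := by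
            rw [hv, him]
            exact mem_image.mpr ⟨m, mem_range.mpr (by omega), rfl⟩
          obtain ⟨w, hw, β, hβ, hwβ⟩ := mem_mul.mp hmem
          obtain ⟨α, hα, u, hu, hαu⟩ := mem_mul.mp hw
          obtain ⟨iA, hiA, hiAeq⟩ := mem_image.mp (him ▸ hAX hα)
          obtain ⟨e, he, heeq⟩ := mem_image.mp (him ▸ hUX hu)
          obtain ⟨kB, hkB, hkBeq⟩ := mem_image.mp (him ▸ hBX hβ)
          rw [mem_range] at hiA he hkB
          have hsum : a ^ (iA + e + kB) = a ^ m := by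
            rw [pow_add, pow_add, hiAeq, heeq, hkBeq, hαu, hwβ]
          have hsum' : iA + e + kB = m := inj _ _ hsum
          have hene : e ≠ m := by
            intro hh
            subst hh
            exact hmU (heeq ▸ hu)
          have hmem3 : α * a ^ 3 * β ∈ (A : Finset H) * (U : Finset H) * (B : Finset H) :=
            mul_mem_mul (mul_mem_mul hα h3) hβ
          rw [hv, him] at hmem3
          obtain ⟨jj, hjj, hjjeq⟩ := mem_image.mp hmem3
          rw [mem_range] at hjj
          have hjj' : jj = iA + 3 + kB := by
            apply inj
            rw [hjjeq, ← hiAeq, ← hkBeq, ← pow_add, ← pow_add]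
          omega
        have hUeq : (U : Finset H) = ((X ^ 3 : redPow H) : Finset H) := by
          apply Finset.Subset.antisymm hUX
          intro w hw
          rw [him] at hw
          obtain ⟨jw, hjw, rfl⟩ := mem_image.mp hw
          rw [mem_range] at hjw
          interval_cases jw
          · rw [pow_zero]; exact one_mem_val U
          · exact key 1 (by omega) (by omega)
          · exact key 2 (by omega) (by omega)
          · exact h3
        exact mem_insert.mpr (Or.inl hUeq)
      · apply mem_insert.mpr
        right
        apply mem_image.mpr
        refine ⟨(U : Finset H).erase 1, mem_powerset.mpr ?_, insert_erase (one_mem_val U)⟩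
        intro w hw
        obtain ⟨hw1, hwU⟩ := mem_erase.mp hw
        have hwm := him ▸ hUX hwU
        obtain ⟨jw, hjw, rfl⟩ := mem_image.mp hwm
        rw [mem_range] at hjw
        interval_cases jw
        · exact absurd (pow_zero a) hw1
        · rw [pow_one]; exact mem_insert_self _ _
        · exact mem_insert.mpr (Or.inr (mem_singleton_self _))
        · exact absurd hwU h3
    have hTHcard :
        (insert ((X ^ 3 : redPow H) : Finset H)
          ((({a, a ^ 2} : Finset H).powerset).image (insert (1 : H)))).card ≤ 5 := by
      refine (card_insert_le _ _).trans ?_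
      have h2 : (({a, a ^ 2} : Finset H).powerset).card ≤ 4 := by
        rw [card_powerset]
        have : ({a, a ^ 2} : Finset H).card ≤ 2 :=
          (card_insert_le _ _).trans (by rw [card_singleton])
        calc 2 ^ ({a, a ^ 2} : Finset H).card ≤ 2 ^ 2 := Nat.pow_le_pow_right (by omega) this
          _ = 4 := by norm_num
      have h3 := card_image_le (s := (({a, a ^ 2} : Finset H).powerset)) (f := insert (1 : H))
      omega
    -- K-side: six distinct divisors of Y^3
    have hpowne : ∀ m n : ℕ, m < n → n ≤ 3 → Y ^ m ≠ Y ^ n := by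
      intro m n hmn hn3 h
      have hXmn : X ^ m = X ^ n := by
        have hh := congrArg f.symm h
        rw [hYdef, ← map_pow, ← map_pow, MulEquiv.symm_apply_apply,
          MulEquiv.symm_apply_apply] at hh
        exact hh
      have hmem : a ^ n ∈ ((X ^ m : redPow H) : Finset H) := by
        rw [hXmn, pow_val hXa]
        exact mem_image.mpr ⟨n, mem_range.mpr (by omega), rfl⟩
      rw [pow_val hXa] at hmem
      obtain ⟨jw, hjw, hje⟩ := mem_image.mp hmem
      rw [mem_range] at hjw
      have := inj _ _ hje
      omega
    have hbY1 : b ∈ ((Y ^ 1 : redPow K) : Finset K) := by rw [pow_one]; exact hbY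
    have hcY1 : c ∈ ((Y ^ 1 : redPow K) : Finset K) := by rw [pow_one]; exact hcY
    have hbY2 : b ∈ ((Y ^ 2 : redPow K) : Finset K) := pow_sub_val (by omega) hbY1
    have hcY2 : c ∈ ((Y ^ 2 : redPow K) : Finset K) := pow_sub_val (by omega) hcY1
    have hbY3 : b ∈ ((Y ^ 3 : redPow K) : Finset K) := pow_sub_val (by omega) hbY1
    have hcY3 : c ∈ ((Y ^ 3 : redPow K) : Finset K) := pow_sub_val (by omega) hcY1
    have h1b : (1 : K) ∈ ((Y ^ 2 : redPow K) : Finset K).erase b :=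
      mem_erase.mpr ⟨Ne.symm hb1, one_mem_val _⟩
    have h1c : (1 : K) ∈ ((Y ^ 2 : redPow K) : Finset K).erase c :=
      mem_erase.mpr ⟨Ne.symm hc1, one_mem_val _⟩
    set V5 : redPow K := ⟨((Y ^ 2 : redPow K) : Finset K).erase b, mem_redPow.mpr h1b⟩
      with hV5
    set V6 : redPow K := ⟨((Y ^ 2 : redPow K) : Finset K).erase c, mem_redPow.mpr h1c⟩
      with hV6
    have hd0 : Dvd2 (Y ^ 0) (Y ^ 3) := ⟨1, Y ^ 3, by rw [pow_zero, mul_one, one_mul]⟩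
    have hd1 : Dvd2 (Y ^ 1) (Y ^ 3) := ⟨1, Y ^ 2, by
      rw [one_mul, pow_one]
      exact (pow_succ' Y 2).symm⟩
    have hd2 : Dvd2 (Y ^ 2) (Y ^ 3) := ⟨1, Y, by
      rw [one_mul]
      exact (pow_succ Y 2).symm⟩
    have hd3 : Dvd2 (Y ^ 3) (Y ^ 3) := ⟨1, 1, by rw [one_mul, mul_one]⟩
    have hd5 : Dvd2 V5 (Y ^ 3) := by
      refine ⟨1, Y, ?_⟩
      rw [one_mul]
      apply Subtype.ext
      rw [val_mul]
      exact erase_mul_pow hbY hb1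
    have hd6 : Dvd2 V6 (Y ^ 3) := by
      refine ⟨1, Y, ?_⟩
      rw [one_mul]
      apply Subtype.ext
      rw [val_mul]
      exact erase_mul_pow hcY hc1
    have hne_val : ∀ (P Q : redPow K) (w : K), w ∈ (P : Finset K) → w ∉ (Q : Finset K) →
        P ≠ Q := by
      intro P Q w hP hQ h
      rw [h] at hP
      exact hQ hP
    have hcV5 : c ∈ (V5 : Finset K) := mem_erase.mpr ⟨Ne.symm hbc, hcY2⟩
    have hbV6 : b ∈ (V6 : Finset K) := mem_erase.mpr ⟨hbc, hbY2⟩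
    have hbnV5 : b ∉ (V5 : Finset K) := notMem_erase _ _
    have hcnV6 : c ∉ (V6 : Finset K) := notMem_erase _ _
    have h50 : V5 ≠ Y ^ 0 := hne_val _ _ c hcV5 (by
      rw [pow_zero, val_one, mem_singleton]
      exact hc1)
    have h60 : V6 ≠ Y ^ 0 := hne_val _ _ b hbV6 (by
      rw [pow_zero, val_one, mem_singleton]
      exact hb1)
    have h51 : V5 ≠ Y ^ 1 := (hne_val _ _ b hbY1 hbnV5).symm
    have h52 : V5 ≠ Y ^ 2 := (hne_val _ _ b hbY2 hbnV5).symm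
    have h53 : V5 ≠ Y ^ 3 := (hne_val _ _ b hbY3 hbnV5).symm
    have h61 : V6 ≠ Y ^ 1 := (hne_val _ _ c hcY1 hcnV6).symm
    have h62 : V6 ≠ Y ^ 2 := (hne_val _ _ c hcY2 hcnV6).symm
    have h63 : V6 ≠ Y ^ 3 := (hne_val _ _ c hcY3 hcnV6).symm
    have h56 : V5 ≠ V6 := (hne_val _ _ b hbV6 hbnV5).symm
    -- the six-element finset
    have hm4 : V5 ∉ ({V6} : Finset (redPow K)) := by
      rw [mem_singleton]; exact h56
    have hm3 : Y ^ 3 ∉ ({V5, V6} : Finset (redPow K)) := by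
      simp only [mem_insert, mem_singleton]
      push_neg
      exact ⟨Ne.symm h53, Ne.symm h63⟩
    have hm2 : Y ^ 2 ∉ ({Y ^ 3, V5, V6} : Finset (redPow K)) := by
      simp only [mem_insert, mem_singleton]
      push_neg
      exact ⟨hpowne 2 3 (by omega) (by omega), Ne.symm h52, Ne.symm h62⟩
    have hm1 : Y ^ 1 ∉ ({Y ^ 2, Y ^ 3, V5, V6} : Finset (redPow K)) := by
      simp only [mem_insert, mem_singleton]
      push_neg
      exact ⟨hpowne 1 2 (by omega) (by omega), hpowne 1 3 (by omega) (by omega),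
        Ne.symm h51, Ne.symm h61⟩
    have hm0 : Y ^ 0 ∉ ({Y ^ 1, Y ^ 2, Y ^ 3, V5, V6} : Finset (redPow K)) := by
      simp only [mem_insert, mem_singleton]
      push_neg
      exact ⟨hpowne 0 1 (by omega) (by omega), hpowne 0 2 (by omega) (by omega),
        hpowne 0 3 (by omega) (by omega), Ne.symm h50, Ne.symm h60⟩
    have hSKcard : ({Y ^ 0, Y ^ 1, Y ^ 2, Y ^ 3, V5, V6} : Finset (redPow K)).card = 6 := by
      rw [card_insert_of_notMem hm0, card_insert_of_notMem hm1, card_insert_of_notMem hm2,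
        card_insert_of_notMem hm3, card_insert_of_notMem hm4, card_singleton]
    have hsymm3 : f.symm (Y ^ 3) = X ^ 3 := by
      rw [hYdef, ← map_pow, MulEquiv.symm_apply_apply]
    have himg : ∀ V ∈ ({Y ^ 0, Y ^ 1, Y ^ 2, Y ^ 3, V5, V6} : Finset (redPow K)),
        ((f.symm V : redPow H) : Finset H) ∈
          insert ((X ^ 3 : redPow H) : Finset H)
            ((({a, a ^ 2} : Finset H).powerset).image (insert (1 : H))) := by
      intro V hV
      apply hbound
      have hdvd : Dvd2 V (Y ^ 3) := by
        simp only [mem_insert, mem_singleton] at hV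
        rcases hV with rfl | rfl | rfl | rfl | rfl | rfl
        exacts [hd0, hd1, hd2, hd3, hd5, hd6]
      obtain ⟨A, B, hAB⟩ := hdvd
      exact ⟨f.symm A, f.symm B, by rw [← map_mul, ← map_mul, hAB, hsymm3]⟩
    have hfinal : ({Y ^ 0, Y ^ 1, Y ^ 2, Y ^ 3, V5, V6} : Finset (redPow K)).card ≤
        (insert ((X ^ 3 : redPow H) : Finset H)
          ((({a, a ^ 2} : Finset H).powerset).image (insert (1 : H)))).card := by
      apply Finset.card_le_card_of_injOn _ himg
      intro P _ Q _ h
      exact f.symm.injective (Subtype.ext h)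
    omega
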